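/- Let S be an N×N Hermitian positive semidefinite matrix with spectral decomposition S = U Λ_S U†, Λ_S = diag(d₁,…,d_N) with d₁ ≥ … ≥ d_N. Let ‖·‖ be a unitarily invariant norm and κ ≥ 1. If Λ* = diag(λ₁*,…,λ_N*) minimizes ‖Λ - Λ_S‖ over diagonal matrices with λ_i ≥ 1 and max λ / min λ ≤ κ, then X* = U Λ* U† minimizes ‖X - S‖ over Hermitian X with X ⪰ I and λ_max(X)/λ_min(X) ≤ κ. -/

import Mathlib

open Matrix ComplexOrder

namespace ShrinkageAux

noncomputable def quad {N : ℕ} (X : Matrix (Fin N) (Fin N) ℂ) (v : Fin N → ℂ) : ℝ :=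
  (star v ⬝ᵥ (X *ᵥ v)).re

noncomputable def nsq {N : ℕ} (v : Fin N → ℂ) : ℝ := ∑ i, Complex.normSq (v i)

lemma quad_conj {N : ℕ} (M V : Matrix (Fin N) (Fin N) ℂ) (v : Fin N → ℂ) :
    quad (V * M * star V) v = quad M (star V *ᵥ v) := by
  unfold quad
  congr 1
  rw [Matrix.star_mulVec, Matrix.star_eq_conjTranspose, Matrix.conjTranspose_conjTranspose,
    ← Matrix.mulVec_mulVec, ← Matrix.mulVec_mulVec, Matrix.dotProduct_mulVec,
    Matrix.dotProduct_mulVec, Matrix.vecMul_vecMul]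

lemma quad_diag {N : ℕ} (f : Fin N → ℝ) (c : Fin N → ℂ) :
    quad (Matrix.diagonal (fun i => (f i : ℂ))) c = ∑ i, f i * Complex.normSq (c i) := by
  unfold quad
  rw [dotProduct, Complex.re_sum]
  congr 1
  funext i
  have h1 : Matrix.diagonal (fun i => (f i : ℂ)) *ᵥ c = fun i => (f i : ℂ) * c i := by
    funext j; simp [Matrix.mulVec_diagonal]
  rw [h1]
  have h2 : star c i * ((f i : ℂ) * c i) = ((f i * Complex.normSq (c i) : ℝ) : ℂ) := by
    have h := Complex.normSq_eq_conj_mul_self (z := c i)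
    push_cast
    rw [h]
    simp [Pi.star_apply]
    ring
  rw [h2, Complex.ofReal_re]

lemma quad_add {N : ℕ} (A B : Matrix (Fin N) (Fin N) ℂ) (v : Fin N → ℂ) :
    quad (A + B) v = quad A v + quad B v := by
  unfold quad
  rw [Matrix.add_mulVec, dotProduct_add, Complex.add_re]

lemma quad_one {N : ℕ} (v : Fin N → ℂ) : quad 1 v = nsq v := by
  unfold quad nsq
  rw [Matrix.one_mulVec, dotProduct, Complex.re_sum]
  congr 1; funext i
  simp [Pi.star_apply, ← Complex.normSq_eq_conj_mul_self]

lemma quad_neg {N : ℕ} (A : Matrix (Fin N) (Fin N) ℂ) (v : Fin N → ℂ) :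
    quad (-A) v = - quad A v := by
  unfold quad
  rw [Matrix.neg_mulVec, dotProduct_neg, Complex.neg_re]

lemma nsq_conj {N : ℕ} (V : Matrix (Fin N) (Fin N) ℂ) (hV2 : V * star V = 1) (v : Fin N → ℂ) :
    nsq (star V *ᵥ v) = nsq v := by
  rw [← quad_one, ← quad_conj, mul_one, hV2, quad_one]

lemma nsq_pos {N : ℕ} (v : Fin N → ℂ) (hv : v ≠ 0) : 0 < nsq v := by
  obtain ⟨i, hi⟩ := Function.ne_iff.mp hv
  exact Finset.sum_pos' (fun j _ => Complex.normSq_nonneg _)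
    ⟨i, Finset.mem_univ _, Complex.normSq_pos.mpr hi⟩

lemma sum_bound {N : ℕ} (f : Fin N → ℝ) (c : Fin N → ℂ) (T : Finset (Fin N)) (a : ℝ)
    (hsupp : ∀ t ∉ T, c t = 0) (hf : ∀ t ∈ T, f t ≤ a) :
    ∑ i, f i * Complex.normSq (c i) ≤ a * nsq c := by
  have hz : ∀ x ∈ Finset.univ, x ∉ T → f x * Complex.normSq (c x) = 0 := by
    intro x _ hx; rw [hsupp x hx]; simp
  have hz' : ∀ x ∈ Finset.univ, x ∉ T → Complex.normSq (c x) = 0 := by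
    intro x _ hx; rw [hsupp x hx]; simp
  have e1 : ∑ i, f i * Complex.normSq (c i) = ∑ i ∈ T, f i * Complex.normSq (c i) :=
    (Finset.sum_subset T.subset_univ hz).symm
  have e2 : nsq c = ∑ i ∈ T, Complex.normSq (c i) :=
    (Finset.sum_subset T.subset_univ hz').symm
  rw [e1, e2, Finset.mul_sum]
  exact Finset.sum_le_sum fun i hi =>
    mul_le_mul_of_nonneg_right (hf i hi) (Complex.normSq_nonneg _)

lemma exists_ker {N : ℕ} (V W : Matrix (Fin N) (Fin N) ℂ)
    (T T' : Finset (Fin N)) (hcard : N < T.card + T'.card) :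
    ∃ v : Fin N → ℂ, v ≠ 0 ∧ (∀ t ∉ T, (star V *ᵥ v) t = 0) ∧
      (∀ t ∉ T', (star W *ᵥ v) t = 0) := by
  set F : (Fin N → ℂ) →ₗ[ℂ] (↥(Tᶜ) → ℂ) × (↥(T'ᶜ) → ℂ) :=
    LinearMap.prod
      ((LinearMap.funLeft ℂ ℂ (Subtype.val : ↥(Tᶜ) → Fin N)).comp (Matrix.mulVecLin (star V)))
      ((LinearMap.funLeft ℂ ℂ (Subtype.val : ↥(T'ᶜ) → Fin N)).comp (Matrix.mulVecLin (star W)))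
    with hF
  have hker : LinearMap.ker F ≠ ⊥ := by
    intro hbot
    have hinj : Function.Injective F := LinearMap.ker_eq_bot.mp hbot
    have hle := LinearMap.finrank_le_finrank_of_injective hinj
    rw [Module.finrank_pi, Module.finrank_prod, Module.finrank_pi, Module.finrank_pi] at hle
    simp only [Fintype.card_coe, Fintype.card_fin, Finset.card_compl, Fintype.card_fin] at hle
    have h1 : T.card ≤ N := by simpa using T.card_le_univ
    have h2 : T'.card ≤ N := by simpa using T'.card_le_univ
    omega
  obtain ⟨v, hv, hv0⟩ := Submodule.ne_bot_iff _ |>.mp hker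
  refine ⟨v, hv0, ?_, ?_⟩
  · intro t ht
    have := congrFun (congrArg Prod.fst hv) ⟨t, Finset.mem_compl.mpr ht⟩
    simpa [hF] using this
  · intro t ht
    have := congrFun (congrArg Prod.snd hv) ⟨t, Finset.mem_compl.mpr ht⟩
    simpa [hF] using this

/-- Weyl-type upper bound: there is a nonzero vector on which the quadratic form
of `A + B` is at most `a + b` times the squared norm. -/
lemma weyl_upper {N : ℕ} (A B V W : Matrix (Fin N) (Fin N) ℂ)
    (dA dB : Fin N → ℝ) (a b : ℝ)
    (hA : A = V * Matrix.diagonal (fun i => (dA i : ℂ)) * star V)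
    (hB : B = W * Matrix.diagonal (fun i => (dB i : ℂ)) * star W)
    (hV2 : V * star V = 1) (hW2 : W * star W = 1)
    (T T' : Finset (Fin N)) (hcard : N < T.card + T'.card)
    (ha : ∀ t ∈ T, dA t ≤ a) (hb : ∀ t ∈ T', dB t ≤ b) :
    ∃ v : Fin N → ℂ, v ≠ 0 ∧ quad (A + B) v ≤ (a + b) * nsq v := by
  obtain ⟨v, hv0, hc, hd⟩ := exists_ker V W T T' hcard
  refine ⟨v, hv0, ?_⟩
  have hAq : quad A v ≤ a * nsq v := by
    rw [hA, quad_conj, quad_diag]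
    calc ∑ i, dA i * Complex.normSq ((star V *ᵥ v) i)
        ≤ a * nsq (star V *ᵥ v) := sum_bound dA _ T a hc ha
      _ = a * nsq v := by rw [nsq_conj V hV2]
  have hBq : quad B v ≤ b * nsq v := by
    rw [hB, quad_conj, quad_diag]
    calc ∑ i, dB i * Complex.normSq ((star W *ᵥ v) i)
        ≤ b * nsq (star W *ᵥ v) := sum_bound dB _ T' b hd hb
      _ = b * nsq v := by rw [nsq_conj W hW2]
  rw [quad_add, add_mul]
  exact add_le_add hAq hBq

lemma weyl_lower {N : ℕ} (A B V W : Matrix (Fin N) (Fin N) ℂ)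
    (dA dB : Fin N → ℝ) (a b : ℝ)
    (hA : A = V * Matrix.diagonal (fun i => (dA i : ℂ)) * star V)
    (hB : B = W * Matrix.diagonal (fun i => (dB i : ℂ)) * star W)
    (hV2 : V * star V = 1) (hW2 : W * star W = 1)
    (T T' : Finset (Fin N)) (hcard : N < T.card + T'.card)
    (ha : ∀ t ∈ T, a ≤ dA t) (hb : ∀ t ∈ T', b ≤ dB t) :
    ∃ v : Fin N → ℂ, v ≠ 0 ∧ (a + b) * nsq v ≤ quad (A + B) v := by
  have hdiagA : Matrix.diagonal (fun i => ((-dA i : ℝ) : ℂ)) =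
      -(Matrix.diagonal fun i => ((dA i : ℝ) : ℂ)) := by
    ext i j; by_cases h : i = j <;> simp [Matrix.diagonal_apply, h]
  have hdiagB : Matrix.diagonal (fun i => ((-dB i : ℝ) : ℂ)) =
      -(Matrix.diagonal fun i => ((dB i : ℝ) : ℂ)) := by
    ext i j; by_cases h : i = j <;> simp [Matrix.diagonal_apply, h]
  have hA' : -A = V * Matrix.diagonal (fun i => ((-dA i : ℝ) : ℂ)) * star V := by
    rw [hA, hdiagA, Matrix.mul_neg, Matrix.neg_mul]
  have hB' : -B = W * Matrix.diagonal (fun i => ((-dB i : ℝ) : ℂ)) * star W := by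
    rw [hB, hdiagB, Matrix.mul_neg, Matrix.neg_mul]
  obtain ⟨v, hv0, hq⟩ := weyl_upper (-A) (-B) V W (fun i => -dA i) (fun i => -dB i)
    (-a) (-b) hA' hB' hV2 hW2 T T' hcard
    (fun t ht => neg_le_neg (ha t ht)) (fun t ht => neg_le_neg (hb t ht))
  refine ⟨v, hv0, ?_⟩
  rw [← neg_add, quad_neg] at hq
  nlinarith [hq]

/-- If the quadratic form is at most `M⬝‖v‖²` on some nonzero `v`, some eigenvalue is `≤ M`. -/
lemma exists_eig_le {N : ℕ} (hN : 0 < N) (X : Matrix (Fin N) (Fin N) ℂ)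
    (hX : X.IsHermitian) (M : ℝ) (v : Fin N → ℂ) (hv : v ≠ 0)
    (h : quad X v ≤ M * nsq v) : ∃ i, hX.eigenvalues i ≤ M := by
  obtain ⟨j, _, hj⟩ := Finset.exists_min_image Finset.univ hX.eigenvalues
    ⟨⟨0, hN⟩, Finset.mem_univ _⟩
  refine ⟨j, ?_⟩
  have hW2 : (hX.eigenvectorUnitary : Matrix (Fin N) (Fin N) ℂ) *
      star (hX.eigenvectorUnitary : Matrix (Fin N) (Fin N) ℂ) = 1 :=
    (Unitary.mem_iff.mp hX.eigenvectorUnitary.2).2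
  have hq : quad X v = ∑ i, hX.eigenvalues i *
      Complex.normSq ((star (hX.eigenvectorUnitary : Matrix (Fin N) (Fin N) ℂ) *ᵥ v) i) := by
    conv_lhs => rw [hX.spectral_theorem, Unitary.conjStarAlgAut_apply]
    rw [quad_conj, show Matrix.diagonal (RCLike.ofReal ∘ hX.eigenvalues) =
      Matrix.diagonal (fun i => ((hX.eigenvalues i : ℝ) : ℂ)) from rfl, quad_diag]
  have hlow : hX.eigenvalues j * nsq v ≤ quad X v := by
    rw [hq, ← nsq_conj _ hW2 v]
    unfold nsq
    rw [Finset.mul_sum]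
    exact Finset.sum_le_sum fun i _ =>
      mul_le_mul_of_nonneg_right (hj i (Finset.mem_univ _)) (Complex.normSq_nonneg _)
  have hpos := nsq_pos v hv
  nlinarith
lemma exists_le_eig {N : ℕ} (hN : 0 < N) (X : Matrix (Fin N) (Fin N) ℂ)
    (hX : X.IsHermitian) (M : ℝ) (v : Fin N → ℂ) (hv : v ≠ 0)
    (h : M * nsq v ≤ quad X v) : ∃ i, M ≤ hX.eigenvalues i := by
  obtain ⟨j, _, hj⟩ := Finset.exists_max_image Finset.univ hX.eigenvalues
    ⟨⟨0, hN⟩, Finset.mem_univ _⟩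
  refine ⟨j, ?_⟩
  have hW2 : (hX.eigenvectorUnitary : Matrix (Fin N) (Fin N) ℂ) *
      star (hX.eigenvectorUnitary : Matrix (Fin N) (Fin N) ℂ) = 1 :=
    (Unitary.mem_iff.mp hX.eigenvectorUnitary.2).2
  have hq : quad X v = ∑ i, hX.eigenvalues i *
      Complex.normSq ((star (hX.eigenvectorUnitary : Matrix (Fin N) (Fin N) ℂ) *ᵥ v) i) := by
    conv_lhs => rw [hX.spectral_theorem, Unitary.conjStarAlgAut_apply]
    rw [quad_conj, show Matrix.diagonal (RCLike.ofReal ∘ hX.eigenvalues) =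
      Matrix.diagonal (fun i => ((hX.eigenvalues i : ℝ) : ℂ)) from rfl, quad_diag]
  have hhigh : quad X v ≤ hX.eigenvalues j * nsq v := by
    rw [hq, ← nsq_conj _ hW2 v]
    unfold nsq
    rw [Finset.mul_sum]
    exact Finset.sum_le_sum fun i _ =>
      mul_le_mul_of_nonneg_right (hj i (Finset.mem_univ _)) (Complex.normSq_nonneg _)
  have hpos := nsq_pos v hv
  nlinarith


lemma perm_diag {N : ℕ} (f : Fin N → ℂ) (σ : Equiv.Perm (Fin N)) :
    ∃ P : Matrix.unitaryGroup (Fin N) ℂ,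
      (P : Matrix (Fin N) (Fin N) ℂ) * Matrix.diagonal f * star (P : Matrix (Fin N) (Fin N) ℂ)
        = Matrix.diagonal (fun i => f (σ i)) := by
  classical
  set P : Matrix (Fin N) (Fin N) ℂ := Matrix.of fun i k => if k = σ i then 1 else 0 with hP
  have hstar : ∀ k j, (star P) k j = if k = σ j then 1 else 0 := by
    intro k j
    simp [hP, Matrix.star_apply, apply_ite]
  have hPP : P * star P = 1 := by
    ext i j
    rw [Matrix.mul_apply]
    simp only [hP, hstar, Matrix.of_apply, ite_mul, one_mul, zero_mul]
    rw [Finset.sum_eq_single (σ i)]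
    · simp [Matrix.one_apply, Equiv.apply_eq_iff_eq, eq_comm]
    · intro k _ hk; simp [hk]
    · intro h; exact absurd (Finset.mem_univ _) h
  have hmem : P ∈ Matrix.unitaryGroup (Fin N) ℂ := by
    rw [Matrix.mem_unitaryGroup_iff]
    exact hPP
  refine ⟨⟨P, hmem⟩, ?_⟩
  ext i j
  rw [Matrix.mul_apply]
  simp only [Matrix.mul_diagonal, hP, hstar, Matrix.of_apply, ite_mul, one_mul, zero_mul]
  rw [Finset.sum_eq_single (σ i)]
  · by_cases h : i = j <;> simp [Matrix.diagonal_apply, h, Equiv.apply_eq_iff_eq, eq_comm]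
  · intro k _ hk; simp [hk]
  · intro h; exact absurd (Finset.mem_univ _) h

end ShrinkageAux


open ShrinkageAux in
/-- Shrinkage structure of the projection estimator (Lemma 1): if the diagonal
matrix `Λ*` minimizes `‖Λ - Λ_S‖` over diagonal matrices with entries `≥ 1` and
condition number `≤ κ`, then `X* = U Λ* U†` minimizes `‖X - S‖` over Hermitian
`X ⪰ I` with condition number `≤ κ`, for any unitarily invariant norm. -/
theorem shrinkage_structure (N : ℕ) (hN : 0 < N) (κ : ℝ) (hκ : 1 ≤ κ)
    (nrm : Matrix (Fin N) (Fin N) ℂ → ℝ)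
    (hUI : ∀ (A : Matrix (Fin N) (Fin N) ℂ)
      (V W : Matrix.unitaryGroup (Fin N) ℂ),
      nrm ((V : Matrix (Fin N) (Fin N) ℂ) * A * (W : Matrix (Fin N) (Fin N) ℂ))
        = nrm A)
    (S : Matrix (Fin N) (Fin N) ℂ) (hS : S.IsHermitian) (hSpsd : S.PosSemidef)
    (U : Matrix.unitaryGroup (Fin N) ℂ) (dvec : Fin N → ℝ)
    (hdord : ∀ i j : Fin N, i ≤ j → dvec j ≤ dvec i)
    (hdecomp : S = (U : Matrix (Fin N) (Fin N) ℂ) *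
      Matrix.diagonal (fun i => (dvec i : ℂ)) *
      star (U : Matrix (Fin N) (Fin N) ℂ))
    (lam : Fin N → ℝ)
    (hlam_ge : ∀ i, 1 ≤ lam i)
    (hlam_cond : ∀ i j, lam i ≤ κ * lam j)
    (hlam_min : ∀ μ : Fin N → ℝ, (∀ i, 1 ≤ μ i) → (∀ i j, μ i ≤ κ * μ j) →
      nrm (Matrix.diagonal (fun i => (lam i : ℂ)) -
            Matrix.diagonal (fun i => (dvec i : ℂ))) ≤
        nrm (Matrix.diagonal (fun i => (μ i : ℂ)) -
            Matrix.diagonal (fun i => (dvec i : ℂ)))) :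
    ∀ (X : Matrix (Fin N) (Fin N) ℂ) (hX : X.IsHermitian),
      (X - 1).PosSemidef →
      (∀ i j, hX.eigenvalues i ≤ κ * hX.eigenvalues j) →
      nrm ((U : Matrix (Fin N) (Fin N) ℂ) *
            Matrix.diagonal (fun i => (lam i : ℂ)) *
            star (U : Matrix (Fin N) (Fin N) ℂ) - S) ≤ nrm (X - S) := by
  intro X hX hXpsd hXcond
  classical
  set Uc : Matrix (Fin N) (Fin N) ℂ := (U : Matrix (Fin N) (Fin N) ℂ) with hUcdef
  have hU1 : star Uc * Uc = 1 := (Unitary.mem_iff.mp U.2).1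
  have hU2 : Uc * star Uc = 1 := (Unitary.mem_iff.mp U.2).2
  have hC : (X - S).IsHermitian := hX.sub hS
  set Vc : Matrix (Fin N) (Fin N) ℂ := (hC.eigenvectorUnitary : Matrix (Fin N) (Fin N) ℂ)
    with hVcdef
  have hV1 : star Vc * Vc = 1 := (Unitary.mem_iff.mp hC.eigenvectorUnitary.2).1
  have hV2 : Vc * star Vc = 1 := (Unitary.mem_iff.mp hC.eigenvectorUnitary.2).2
  set ev : Fin N → ℝ := hC.eigenvalues with hevdef
  have hCdecomp : X - S = Vc * Matrix.diagonal (fun i => (ev i : ℂ)) * star Vc :=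
    hC.spectral_theorem
  set σ := Tuple.sort ev with hσdef
  have hmono : Monotone (ev ∘ σ) := Tuple.monotone_sort ev
  set μ : Fin N → ℝ := fun i => dvec i + ev (σ i) with hμdef
  set evX : Fin N → ℝ := hX.eigenvalues with hevXdef
  -- eigenvalues of X are at least 1
  set Wx : Matrix (Fin N) (Fin N) ℂ := (hX.eigenvectorUnitary : Matrix (Fin N) (Fin N) ℂ)
    with hWxdef
  have hW1 : star Wx * Wx = 1 := (Unitary.mem_iff.mp hX.eigenvectorUnitary.2).1
  have hW2 : Wx * star Wx = 1 := (Unitary.mem_iff.mp hX.eigenvectorUnitary.2).2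
  have hXdecomp : X = Wx * Matrix.diagonal (fun i => (evX i : ℂ)) * star Wx :=
    hX.spectral_theorem
  have hevX1 : ∀ j, 1 ≤ evX j := by
    intro j
    have hd1 : Matrix.diagonal (fun i => ((evX i - 1 : ℝ) : ℂ)) =
        Matrix.diagonal (fun i => (evX i : ℂ)) - 1 := by
      ext i k; by_cases h : i = k <;> simp [Matrix.diagonal_apply, Matrix.one_apply, h]
    have e : Wx * Matrix.diagonal (fun i => ((evX i - 1 : ℝ) : ℂ)) * star Wx = X - 1 := by
      rw [hd1, Matrix.mul_sub, Matrix.mul_one, Matrix.sub_mul, hW2, ← hXdecomp]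
    have h0 : 0 ≤ quad (X - 1) (Wx *ᵥ Pi.single j 1) := by
      have := hXpsd.dotProduct_mulVec_nonneg (Wx *ᵥ Pi.single j 1)
      rw [Complex.le_def] at this
      simpa [quad] using this.1
    have hsingle : star Wx *ᵥ (Wx *ᵥ Pi.single j 1) = Pi.single j 1 := by
      rw [Matrix.mulVec_mulVec, hW1, Matrix.one_mulVec]
    have hqval : quad (X - 1) (Wx *ᵥ Pi.single j 1) = evX j - 1 := by
      rw [← e, quad_conj, hsingle, quad_diag]
      rw [Finset.sum_eq_single j]
      · simp
      · intro k _ hk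
        simp [Pi.single_eq_of_ne hk]
      · intro h; exact absurd (Finset.mem_univ _) h
    rw [hqval] at h0
    linarith
  -- Weyl-type bounds: each μ i lies between some eigenvalues of X
  have hXsum : S + (X - S) = X := by abel
  have hupper : ∀ i : Fin N, ∃ j, evX j ≤ μ i := by
    intro i
    have hcard : N < (Finset.Ici i).card + ((Finset.Iic i).image σ).card := by
      rw [Fin.card_Ici, Finset.card_image_of_injective _ σ.injective, Fin.card_Iic]
      have := i.isLt
      omega
    obtain ⟨v, hv0, hq⟩ := weyl_upper S (X - S) Uc Vc dvec ev (dvec i) (ev (σ i))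
      hdecomp hCdecomp hU2 hV2 (Finset.Ici i) ((Finset.Iic i).image σ) hcard
      (fun t ht => hdord i t (Finset.mem_Ici.mp ht))
      (by
        intro t ht
        obtain ⟨k, hk, rfl⟩ := Finset.mem_image.mp ht
        exact hmono (Finset.mem_Iic.mp hk))
    rw [hXsum] at hq
    exact exists_eig_le hN X hX _ v hv0 hq
  have hlower : ∀ i : Fin N, ∃ j, μ i ≤ evX j := by
    intro i
    have hcard : N < (Finset.Iic i).card + ((Finset.Ici i).image σ).card := by
      rw [Fin.card_Iic, Finset.card_image_of_injective _ σ.injective, Fin.card_Ici]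
      have := i.isLt
      omega
    obtain ⟨v, hv0, hq⟩ := weyl_lower S (X - S) Uc Vc dvec ev (dvec i) (ev (σ i))
      hdecomp hCdecomp hU2 hV2 (Finset.Iic i) ((Finset.Ici i).image σ) hcard
      (fun t ht => hdord t i (Finset.mem_Iic.mp ht))
      (by
        intro t ht
        obtain ⟨k, hk, rfl⟩ := Finset.mem_image.mp ht
        exact hmono (Finset.mem_Ici.mp hk))
    rw [hXsum] at hq
    exact exists_le_eig hN X hX _ v hv0 hq
  -- feasibility of μ
  have hμ1 : ∀ i, 1 ≤ μ i := by
    intro i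
    obtain ⟨j, hj⟩ := hupper i
    exact le_trans (hevX1 j) hj
  have hμcond : ∀ i j, μ i ≤ κ * μ j := by
    intro i j
    obtain ⟨p, hp⟩ := hlower i
    obtain ⟨q, hq⟩ := hupper j
    calc μ i ≤ evX p := hp
      _ ≤ κ * evX q := hXcond p q
      _ ≤ κ * μ j := mul_le_mul_of_nonneg_left hq (by linarith)
  -- norm chain
  have e1 : Uc * Matrix.diagonal (fun i => (lam i : ℂ)) * star Uc - S =
      Uc * (Matrix.diagonal (fun i => (lam i : ℂ)) -
        Matrix.diagonal (fun i => (dvec i : ℂ))) * star Uc := by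
    rw [hdecomp, Matrix.mul_sub, Matrix.sub_mul]
  have e2 : nrm (Uc * (Matrix.diagonal (fun i => (lam i : ℂ)) -
      Matrix.diagonal (fun i => (dvec i : ℂ))) * star Uc) =
      nrm (Matrix.diagonal (fun i => (lam i : ℂ)) -
        Matrix.diagonal (fun i => (dvec i : ℂ))) :=
    hUI _ U ⟨star Uc, Unitary.star_mem U.2⟩
  have e4 : Matrix.diagonal (fun i => (μ i : ℂ)) - Matrix.diagonal (fun i => (dvec i : ℂ)) =
      Matrix.diagonal (fun i => ((ev (σ i) : ℝ) : ℂ)) := by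
    ext i k
    by_cases h : i = k <;> simp [Matrix.diagonal_apply, h, hμdef]
  obtain ⟨P, hP⟩ := perm_diag (fun i => (ev i : ℂ)) σ
  have e5 : nrm (Matrix.diagonal (fun i => ((ev (σ i) : ℝ) : ℂ))) =
      nrm (Matrix.diagonal (fun i => (ev i : ℂ))) := by
    rw [← hP]
    exact hUI _ P ⟨star (P : Matrix (Fin N) (Fin N) ℂ), Unitary.star_mem P.2⟩
  have e6 : star Vc * (X - S) * Vc = Matrix.diagonal (fun i => (ev i : ℂ)) := by
    rw [hCdecomp, ← Matrix.mul_assoc, ← Matrix.mul_assoc, hV1, Matrix.one_mul,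
      Matrix.mul_assoc, hV1, Matrix.mul_one]
  have e7 : nrm (Matrix.diagonal (fun i => (ev i : ℂ))) = nrm (X - S) := by
    rw [← e6]
    exact hUI _ ⟨star Vc, Unitary.star_mem hC.eigenvectorUnitary.2⟩ hC.eigenvectorUnitary
  calc nrm (Uc * Matrix.diagonal (fun i => (lam i : ℂ)) * star Uc - S)
      = nrm (Matrix.diagonal (fun i => (lam i : ℂ)) -
          Matrix.diagonal (fun i => (dvec i : ℂ))) := by rw [e1, e2]
    _ ≤ nrm (Matrix.diagonal (fun i => (μ i : ℂ)) -
          Matrix.diagonal (fun i => (dvec i : ℂ))) := hlam_min μ hμ1 hμcond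
    _ = nrm (X - S) := by rw [e4, e5, e7]
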